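/- Let ℱ be a point-distinguishing family of real functions on X inducing the spacetime (X, 𝒯_ℱ, ≤_ℱ, d_ℱ), and let ℛ be the set of all 𝒯_ℱ-continuous d_ℱ-rushing functions. Then ℱ ⊆ ℛ, the initial topology of ℛ equals 𝒯_ℱ, the order induced by ℛ equals ≤_ℱ, and the Lorentzian distance induced by ℛ equals d_ℱ. -/

import Mathlib

theorem stmt17 {X : Type*} (F : Set (X → ℝ))
    (hsep : ∀ x y : X, (∀ f ∈ F, f x = f y) → x = y)
    [T : TopologicalSpace X]
    (hT : T = ⨅ f ∈ F, TopologicalSpace.induced f inferInstance)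
    (le : X → X → Prop) (hle : ∀ x y, le x y ↔ ∀ f ∈ F, f x ≤ f y)
    (d : X → X → EReal)
    (hd : ∀ x y, d x y = max 0 (⨅ f ∈ F, ((f y - f x : ℝ) : EReal)))
    (R : Set (X → ℝ))
    (hR : ∀ g, g ∈ R ↔ Continuous g ∧
        ∀ x y, le x y → (g x : EReal) + d x y ≤ (g y : EReal)) :
    F ⊆ R ∧
    (T = ⨅ g ∈ R, TopologicalSpace.induced g inferInstance) ∧
    (∀ x y, le x y ↔ ∀ g ∈ R, g x ≤ g y) ∧
    (∀ x y, d x y = max 0 (⨅ g ∈ R, ((g y - g x : ℝ) : EReal))) := by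
  have hFR : F ⊆ R := by
    intro f hf
    rw [hR]
    constructor
    · rw [hT, continuous_iff_le_induced]
      exact iInf₂_le f hf
    · intro x y hxy
      have hfle : f x ≤ f y := (hle x y).1 hxy f hf
      have h1 : d x y ≤ ((f y - f x : ℝ) : EReal) := by
        rw [hd]
        refine max_le ?_ (iInf₂_le f hf)
        exact_mod_cast sub_nonneg.2 hfle
      calc (f x : EReal) + d x y ≤ (f x : EReal) + ((f y - f x : ℝ) : EReal) :=
            add_le_add le_rfl h1
        _ = (f y : EReal) := by rw [← EReal.coe_add]; norm_num
  refine ⟨hFR, ?_, ?_, ?_⟩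
  · apply le_antisymm
    · refine le_iInf₂ fun g hg => ?_
      exact continuous_iff_le_induced.1 ((hR g).1 hg).1
    · rw [hT]
      exact le_iInf₂ fun f hf => iInf₂_le f (hFR hf)
  · intro x y
    constructor
    · intro hxy g hg
      have h := ((hR g).1 hg).2 x y hxy
      have h0 : (0 : EReal) ≤ d x y := by rw [hd]; exact le_max_left _ _
      have : (g x : EReal) ≤ (g y : EReal) := by
        calc (g x : EReal) = (g x : EReal) + 0 := by rw [add_zero]
          _ ≤ (g x : EReal) + d x y := add_le_add le_rfl h0
          _ ≤ (g y : EReal) := h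
      exact_mod_cast this
    · intro h
      exact (hle x y).2 fun f hf => h f (hFR hf)
  · intro x y
    apply le_antisymm
    · by_cases hxy : le x y
      · refine le_trans ?_ (le_max_right _ _)
        refine le_iInf₂ fun g hg => ?_
        have h := ((hR g).1 hg).2 x y hxy
        rw [EReal.coe_sub, EReal.le_sub_iff_add_le (Or.inl (EReal.coe_ne_bot _))
          (Or.inl (EReal.coe_ne_top _)), add_comm]
        exact h
      · have : ∃ f ∈ F, f y < f x := by
          by_contra hc
          push_neg at hc
          exact hxy ((hle x y).2 hc)
        obtain ⟨f, hf, hflt⟩ := this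
        have : d x y = 0 := by
          rw [hd]
          have h1 : (⨅ f ∈ F, ((f y - f x : ℝ) : EReal)) ≤ ((f y - f x : ℝ) : EReal) :=
            iInf₂_le f hf
          have h2 : ((f y - f x : ℝ) : EReal) ≤ 0 := by
            exact_mod_cast sub_nonpos.2 hflt.le
          exact max_eq_left (h1.trans h2)
        rw [this]
        exact le_max_left _ _
    · rw [hd]
      exact max_le (le_max_left _ _)
        (le_trans (le_iInf₂ fun f hf => iInf₂_le f (hFR hf)) (le_max_right _ _))
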